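/- For all real numbers x > 0 and y > 0, the determinant of the 4-by-4 matrix [[5,5,2,x],[2,5,5,2],[1,4,5,5],[y,1,2,5]] is strictly negative. -/

import Mathlib

/-- For all real x > 0 and y > 0, the determinant of
[[5,5,2,x],[2,5,5,2],[1,4,5,5],[y,1,2,5]] is strictly negative. -/
theorem stmt_4 (x y : ℝ) (hx : 0 < x) (hy : 0 < y) :
    (!![5, 5, 2, x; 2, 5, 5, 2; 1, 4, 5, 5; y, 1, 2, 5] :
      Matrix (Fin 4) (Fin 4) ℝ).det < 0 := by
  simp [Matrix.det_succ_row_zero, Fin.sum_univ_succ, Matrix.vecHead, Matrix.vecTail, Fin.succAbove]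
  nlinarith [mul_pos hx hy]
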